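/- arXiv:2411.06295 — 6 statements merged into one kernel-verified Lean document; each statement's English description precedes it below -/
import Mathlib

section
/- Decomposition property of personalized PageRank: for every vertex s ∈ V, π_s = α·e_s + ((1−α)/d(s))·Σ_{v : v adjacent to s} π_v. -/
open Matrix

/-- The random-walk transition matrix `W = D⁻¹ A` of a finite simple graph,
with entries `W i j = A i j / d(i)`. -/
noncomputable def walkMatrix {V : Type*} [Fintype V] [DecidableEq V]
    (G : SimpleGraph V) [DecidableRel G.Adj] : Matrix V V ℝ :=
  (Matrix.diagonal fun i => ((G.degree i : ℝ))⁻¹) * G.adjMatrix ℝ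

lemma walkMatrix_apply {V : Type*} [Fintype V] [DecidableEq V]
    (G : SimpleGraph V) [DecidableRel G.Adj] (i j : V) :
    walkMatrix G i j = ((G.degree i : ℝ))⁻¹ * G.adjMatrix ℝ i j := by
  rw [walkMatrix, Matrix.diagonal_mul]

lemma walkMatrix_row_sum {V : Type*} [Fintype V] [DecidableEq V]
    (G : SimpleGraph V) [DecidableRel G.Adj] (hd : ∀ u : V, 0 < G.degree u) (i : V) :
    ∑ j, walkMatrix G i j = 1 := by
  have hdeg : ∑ j, G.adjMatrix ℝ i j = (G.degree i : ℝ) := by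
    simp only [SimpleGraph.adjMatrix_apply, Finset.sum_boole, SimpleGraph.degree,
      SimpleGraph.neighborFinset_eq_filter]
  simp only [walkMatrix_apply]
  rw [← Finset.mul_sum, hdeg, inv_mul_cancel₀]
  exact_mod_cast (hd i).ne'

/-- Kernel of `1 - (1-α)•W` is trivial (maximum principle). -/
lemma kernel_trivial {V : Type*} [Fintype V] [DecidableEq V]
    (G : SimpleGraph V) [DecidableRel G.Adj]
    (hd : ∀ u : V, 0 < G.degree u)
    (α : ℝ) (hα : α ∈ Set.Ioo (0 : ℝ) 1)
    (x : V → ℝ) (hx : ((1 : Matrix V V ℝ) - (1 - α) • walkMatrix G) *ᵥ x = 0) :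
    x = 0 := by
  rw [Matrix.sub_mulVec, Matrix.one_mulVec, Matrix.smul_mulVec, sub_eq_zero] at hx
  have hfix : ∀ u, x u = (1 - α) * ∑ v, walkMatrix G u v * x v := by
    intro u
    have := congrFun hx u
    simpa [Matrix.mulVec, dotProduct] using this
  by_cases hV : Nonempty V
  · obtain ⟨u0, -, hu0⟩ := Finset.exists_max_image Finset.univ (fun u => |x u|)
      (Finset.univ_nonempty)
    have hWnn : ∀ u v, 0 ≤ walkMatrix G u v := by
      intro u v
      rw [walkMatrix_apply, SimpleGraph.adjMatrix_apply]
      have h0 : (0:ℝ) ≤ ((G.degree u : ℝ))⁻¹ := by positivity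
      split_ifs <;> simp [h0]
    have hb : |x u0| ≤ (1 - α) * |x u0| := by
      calc |x u0| = (1 - α) * |∑ v, walkMatrix G u0 v * x v| := by
            rw [hfix u0, abs_mul, abs_of_nonneg (by linarith [hα.2])]
        _ ≤ (1 - α) * ∑ v, walkMatrix G u0 v * |x v| := by
            apply mul_le_mul_of_nonneg_left _ (by linarith [hα.2])
            refine (Finset.abs_sum_le_sum_abs _ _).trans ?_
            apply Finset.sum_le_sum
            intro v _
            rw [abs_mul, abs_of_nonneg (hWnn u0 v)]
        _ ≤ (1 - α) * ∑ v, walkMatrix G u0 v * |x u0| := by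
            apply mul_le_mul_of_nonneg_left _ (by linarith [hα.2])
            exact Finset.sum_le_sum fun v _ =>
              mul_le_mul_of_nonneg_left (hu0 v (Finset.mem_univ v)) (hWnn u0 v)
        _ = (1 - α) * |x u0| := by
            rw [← Finset.sum_mul, walkMatrix_row_sum G hd, one_mul]
    have hz : |x u0| = 0 := by nlinarith [abs_nonneg (x u0), hα.1]
    funext u
    have := hu0 u (Finset.mem_univ u)
    rw [hz] at this
    have := abs_nonneg (x u)
    simp only [Pi.zero_apply]
    have : |x u| = 0 := le_antisymm ‹|x u| ≤ 0› this
    exact abs_eq_zero.mp this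
  · funext u; exact absurd ⟨u⟩ hV

/-- Decomposition property of personalized PageRank: for every vertex `s`,
`π_s = α·e_s + ((1−α)/d(s)) · ∑_{v ~ s} π_v`. -/
theorem ppr_decomposition
    {V : Type*} [Fintype V] [DecidableEq V]
    (G : SimpleGraph V) [DecidableRel G.Adj]
    (hd : ∀ u : V, 0 < G.degree u)
    (α : ℝ) (hα : α ∈ Set.Ioo (0 : ℝ) 1)
    (π : V → V → ℝ)
    (hπ : ∀ s : V,
      π s = α • (Pi.single s 1 : V → ℝ) + (1 - α) • ((walkMatrix G)ᵀ *ᵥ π s))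
    (s : V) :
    π s = α • (Pi.single s 1 : V → ℝ) +
      ((1 - α) / (G.degree s : ℝ)) • ∑ v ∈ G.neighborFinset s, π v := by
  set W := walkMatrix G with hW
  set M : Matrix V V ℝ := 1 - (1 - α) • Wᵀ with hM
  -- M applied to each π t
  have h1 : ∀ t : V, M *ᵥ π t = α • (Pi.single t 1 : V → ℝ) := by
    intro t
    rw [hM, Matrix.sub_mulVec, Matrix.one_mulVec, Matrix.smul_mulVec]
    nth_rewrite 1 [hπ t]
    abel
  -- injectivity of mulVec M
  have hinj : Function.Injective (M.mulVec) := by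
    rw [Matrix.mulVec_injective_iff_isUnit, Matrix.isUnit_iff_isUnit_det,
      ← Matrix.det_transpose, ← Matrix.isUnit_iff_isUnit_det,
      ← Matrix.mulVec_injective_iff_isUnit]
    have hMT : Mᵀ = 1 - (1 - α) • W := by
      rw [hM, Matrix.transpose_sub, Matrix.transpose_one, Matrix.transpose_smul,
        Matrix.transpose_transpose]
    rw [hMT]
    rw [show ((1 : Matrix V V ℝ) - (1 - α) • W).mulVec
        = ((1 : Matrix V V ℝ) - (1 - α) • W).mulVecLin from rfl]
    rw [injective_iff_map_eq_zero]
    intro x hx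
    exact kernel_trivial G hd α hα x hx
  apply hinj
  rw [h1 s]
  -- compute M applied to the RHS
  have h2 : Wᵀ *ᵥ (Pi.single s 1 : V → ℝ)
      = ((G.degree s : ℝ))⁻¹ • ∑ v ∈ G.neighborFinset s, (Pi.single v 1 : V → ℝ) := by
    funext u
    rw [Pi.smul_apply, Finset.sum_apply]
    rw [show (Wᵀ *ᵥ (Pi.single s 1 : V → ℝ)) u = Wᵀ u s * 1 from congrFun (Matrix.mulVec_single _ _ _) u]
    rw [Finset.sum_pi_single]
    rw [Matrix.transpose_apply, hW, walkMatrix_apply, SimpleGraph.adjMatrix_apply]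
    by_cases h : G.Adj s u
    · rw [if_pos h, if_pos ((SimpleGraph.mem_neighborFinset G s u).mpr h)]
      simp
    · rw [if_neg h, if_neg (fun hu => h ((SimpleGraph.mem_neighborFinset G s u).mp hu))]
      simp
  have hmsum : M *ᵥ (∑ v ∈ G.neighborFinset s, π v)
      = ∑ v ∈ G.neighborFinset s, M *ᵥ π v := map_sum (Matrix.mulVecLin M) _ _
  rw [Matrix.mulVec_add, Matrix.mulVec_smul, Matrix.mulVec_smul, hmsum]
  have hds : (0:ℝ) < (G.degree s : ℝ) := by exact_mod_cast hd s
  have hsum : ∑ v ∈ G.neighborFinset s, M *ᵥ π v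
      = α • ∑ v ∈ G.neighborFinset s, (Pi.single v 1 : V → ℝ) := by
    rw [Finset.smul_sum]
    exact Finset.sum_congr rfl fun v _ => h1 v
  rw [hsum, hM, Matrix.sub_mulVec, Matrix.one_mulVec, Matrix.smul_mulVec, h2]
  funext u
  simp only [Pi.add_apply, Pi.smul_apply, Pi.sub_apply, smul_eq_mul]
  field_simp
  ring
end

section
/- Symmetry property of personalized PageRank on undirected graphs: for every pair of vertices u, v ∈ V, d(u)·π_u(v) = d(v)·π_v(u). -/
open Matrix

/-- Symmetry property of personalized PageRank on undirected graphs: for every pair of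
vertices `u, v`, `d(u)·π_u(v) = d(v)·π_v(u)`. -/
theorem ppr_symmetry
    {V : Type*} [Fintype V] [DecidableEq V]
    (G : SimpleGraph V) [DecidableRel G.Adj]
    (hd : ∀ u : V, 0 < G.degree u)
    (α : ℝ) (hα : α ∈ Set.Ioo (0 : ℝ) 1)
    (π : V → V → ℝ)
    (hπ : ∀ s : V,
      π s = α • (Pi.single s 1 : V → ℝ) + (1 - α) • ((walkMatrix G)ᵀ *ᵥ π s))
    (u v : V) :
    (G.degree u : ℝ) * π u v = (G.degree v : ℝ) * π v u := by
  obtain ⟨hα0, hα1⟩ := hα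
  set d : V → ℝ := fun x => (G.degree x : ℝ) with hd'
  have hdpos : ∀ x, (0:ℝ) < d x := fun x => Nat.cast_pos.mpr (hd x)
  have hdne : ∀ x, d x ≠ 0 := fun x => (hdpos x).ne'
  -- entrywise form of the fixed point equation
  have hπ' : ∀ s x, π s x = α * (if x = s then (1:ℝ) else 0)
      + (1 - α) * ∑ y, G.adjMatrix ℝ x y * (π s y / d y) := by
    intro s x
    have h := congrFun (hπ s) x
    simp only [Pi.add_apply, Pi.smul_apply, smul_eq_mul, Pi.single_apply,
      Matrix.mulVec, Matrix.transpose_apply, dotProduct] at h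
    rw [h]
    congr 1
    rw [Finset.mul_sum, Finset.mul_sum]
    apply Finset.sum_congr rfl
    intro y _
    congr 1
    have hw : walkMatrix G y x = (d y)⁻¹ * G.adjMatrix ℝ y x := by
      simp only [walkMatrix, Matrix.diagonal_mul]
      rfl
    have hsym : G.adjMatrix ℝ y x = G.adjMatrix ℝ x y := by
      simp [SimpleGraph.adjMatrix_apply, G.adj_comm]
    rw [hw, hsym]
    field_simp
  -- the symmetric double sum
  have hS : (∑ x, ∑ y, (π v x / d x) * (G.adjMatrix ℝ x y * (π u y / d y)))
      = ∑ x, ∑ y, (π u x / d x) * (G.adjMatrix ℝ x y * (π v y / d y)) := by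
    rw [Finset.sum_comm]
    apply Finset.sum_congr rfl; intro x _
    apply Finset.sum_congr rfl; intro y _
    have hsym : G.adjMatrix ℝ y x = G.adjMatrix ℝ x y := by
      simp [SimpleGraph.adjMatrix_apply, G.adj_comm]
    rw [hsym]; ring
  -- compute T := ∑ x, (π v x / d x) * π u x two ways
  have hT : (∑ x, (π v x / d x) * π u x) = ∑ x, (π u x / d x) * π v x := by
    apply Finset.sum_congr rfl; intro x _; ring
  have h1 : (∑ x, (π v x / d x) * π u x)
      = α * (π v u / d u)
        + (1 - α) * ∑ x, ∑ y, (π v x / d x) * (G.adjMatrix ℝ x y * (π u y / d y)) := by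
    calc (∑ x, (π v x / d x) * π u x)
        = ∑ x, ((π v x / d x) * (α * (if x = u then (1:ℝ) else 0))
            + (1 - α) * ((π v x / d x) * ∑ y, G.adjMatrix ℝ x y * (π u y / d y))) := by
          apply Finset.sum_congr rfl; intro x _
          rw [hπ' u x]; ring
      _ = α * (π v u / d u)
          + (1 - α) * ∑ x, ∑ y, (π v x / d x) * (G.adjMatrix ℝ x y * (π u y / d y)) := by
          rw [Finset.sum_add_distrib, ← Finset.mul_sum]
          congr 1
          · have he : (∑ x, (π v x / d x) * (α * (if x = u then (1:ℝ) else 0)))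
                = ∑ x, if x = u then α * (π v x / d x) else 0 := by
              apply Finset.sum_congr rfl; intro x _; split <;> ring
            rw [he, Finset.sum_ite_eq' Finset.univ u (fun x => α * (π v x / d x))]
            simp
          · congr 1
            apply Finset.sum_congr rfl; intro x _
            rw [Finset.mul_sum]
  have h2 : (∑ x, (π u x / d x) * π v x)
      = α * (π u v / d v)
        + (1 - α) * ∑ x, ∑ y, (π u x / d x) * (G.adjMatrix ℝ x y * (π v y / d y)) := by
    calc (∑ x, (π u x / d x) * π v x)
        = ∑ x, ((π u x / d x) * (α * (if x = v then (1:ℝ) else 0))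
            + (1 - α) * ((π u x / d x) * ∑ y, G.adjMatrix ℝ x y * (π v y / d y))) := by
          apply Finset.sum_congr rfl; intro x _
          rw [hπ' v x]; ring
      _ = α * (π u v / d v)
          + (1 - α) * ∑ x, ∑ y, (π u x / d x) * (G.adjMatrix ℝ x y * (π v y / d y)) := by
          rw [Finset.sum_add_distrib, ← Finset.mul_sum]
          congr 1
          · have he : (∑ x, (π u x / d x) * (α * (if x = v then (1:ℝ) else 0)))
                = ∑ x, if x = v then α * (π u x / d x) else 0 := by
              apply Finset.sum_congr rfl; intro x _; split <;> ring
            rw [he, Finset.sum_ite_eq' Finset.univ v (fun x => α * (π u x / d x))]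
            simp
          · congr 1
            apply Finset.sum_congr rfl; intro x _
            rw [Finset.mul_sum]
  have key : α * (π v u / d u) = α * (π u v / d v) := by
    have := h1.symm.trans (hT.trans h2)
    rw [hS] at this
    linarith
  have key2 : π v u / d u = π u v / d v :=
    mul_left_cancel₀ (ne_of_gt hα0) key
  field_simp [hdne u, hdne v] at key2
  show d u * π u v = d v * π v u
  linear_combination -key2
end

section
/- For every vertex t ∈ V, Σ_{x∈V} π_x(t)/d(t) ≤ 1; equivalently, Σ_{x∈V} π_x(t) ≤ d(t). -/
open Matrix Finset

/-- For every vertex `t`, `∑_{x∈V} π_x(t)/d(t) ≤ 1`; equivalently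
`∑_{x∈V} π_x(t) ≤ d(t)`. -/
theorem ppr_column_sum_bound
    {V : Type*} [Fintype V] [DecidableEq V]
    (G : SimpleGraph V) [DecidableRel G.Adj]
    (hd : ∀ u : V, 0 < G.degree u)
    (α : ℝ) (hα : α ∈ Set.Ioo (0 : ℝ) 1)
    (π : V → V → ℝ)
    (hπ : ∀ s : V,
      π s = α • (Pi.single s 1 : V → ℝ) + (1 - α) • ((walkMatrix G)ᵀ *ᵥ π s))
    (t : V) :
    ∑ x : V, π x t / (G.degree t : ℝ) ≤ 1 ∧ ∑ x : V, π x t ≤ (G.degree t : ℝ) := by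
  obtain ⟨hα0, hα1⟩ := hα
  have hdpos : ∀ u : V, (0:ℝ) < (G.degree u : ℝ) := fun u => by exact_mod_cast hd u
  set S : V → ℝ := fun u => ∑ x : V, π x u with hSdef
  set f : V → ℝ := fun u => S u / (G.degree u : ℝ) with hfdef
  have hcol : ∀ v : V, ∑ u : V, G.adjMatrix ℝ u v = (G.degree v : ℝ) := by
    intro v
    have : ∀ u : V, G.adjMatrix ℝ u v = G.adjMatrix ℝ v u := by
      intro u; simp [SimpleGraph.adj_comm]
    rw [Finset.sum_congr rfl fun u _ => this u]
    rw [← mul_one (G.degree v : ℝ), ← SimpleGraph.adjMatrix_mulVec_const_apply]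
    simp only [Matrix.mulVec, dotProduct, Function.const_apply, mul_one]
  have h1 : ∀ s v : V, π s v = α * (Pi.single s 1 : V → ℝ) v
      + (1 - α) * ∑ u : V, ((G.degree u : ℝ))⁻¹ * G.adjMatrix ℝ u v * π s u := by
    intro s v
    have h := congrFun (hπ s) v
    rw [h]
    simp only [Pi.add_apply, Pi.smul_apply, smul_eq_mul, Matrix.mulVec, dotProduct,
      Matrix.transpose_apply, walkMatrix, Matrix.diagonal_mul]
  have hS : ∀ v : V, S v = α + (1 - α) * ∑ u : V, G.adjMatrix ℝ u v * f u := by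
    intro v
    have : S v = ∑ s : V, (α * (Pi.single s 1 : V → ℝ) v
        + (1 - α) * ∑ u : V, ((G.degree u : ℝ))⁻¹ * G.adjMatrix ℝ u v * π s u) := by
      rw [hSdef]
      exact Finset.sum_congr rfl fun s _ => h1 s v
    rw [this, Finset.sum_add_distrib, ← Finset.mul_sum, ← Finset.mul_sum]
    have e1 : ∑ s : V, (Pi.single s 1 : V → ℝ) v = 1 := by
      simp [Pi.single_apply]
    have e2 : ∑ s : V, ∑ u : V, ((G.degree u : ℝ))⁻¹ * G.adjMatrix ℝ u v * π s u
        = ∑ u : V, G.adjMatrix ℝ u v * f u := by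
      rw [Finset.sum_comm]
      refine Finset.sum_congr rfl fun u _ => ?_
      rw [← Finset.mul_sum]
      simp only [hfdef, hSdef, div_eq_mul_inv]
      ring
    rw [e1, e2, mul_one]
  obtain ⟨u0, -, hmax⟩ := Finset.exists_max_image Finset.univ f ⟨t, Finset.mem_univ t⟩
  have hAnn : ∀ u v : V, 0 ≤ G.adjMatrix ℝ u v := by
    intro u v; simp only [SimpleGraph.adjMatrix_apply]; positivity
  have hsum_le : ∑ u : V, G.adjMatrix ℝ u u0 * f u ≤ (G.degree u0 : ℝ) * f u0 := by
    calc ∑ u : V, G.adjMatrix ℝ u u0 * f u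
        ≤ ∑ u : V, G.adjMatrix ℝ u u0 * f u0 :=
          Finset.sum_le_sum fun u _ =>
            mul_le_mul_of_nonneg_left (hmax u (Finset.mem_univ u)) (hAnn u u0)
      _ = (G.degree u0 : ℝ) * f u0 := by rw [← Finset.sum_mul, hcol]
  have hS0 : S u0 = (G.degree u0 : ℝ) * f u0 := by
    rw [hfdef]
    field_simp
    rw [mul_div_assoc, div_self (ne_of_gt (hdpos u0)), mul_one]
  have key : (G.degree u0 : ℝ) * f u0 ≤ α + (1 - α) * ((G.degree u0 : ℝ) * f u0) := by
    have h0 : (0:ℝ) ≤ 1 - α := by linarith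
    calc (G.degree u0 : ℝ) * f u0 = S u0 := hS0.symm
      _ = α + (1 - α) * ∑ u : V, G.adjMatrix ℝ u u0 * f u := hS u0
      _ ≤ α + (1 - α) * ((G.degree u0 : ℝ) * f u0) :=
          add_le_add_right (mul_le_mul_of_nonneg_left hsum_le h0) α
  have h1le : (1:ℝ) ≤ (G.degree u0 : ℝ) := by exact_mod_cast hd u0
  have hdf : (G.degree u0 : ℝ) * f u0 ≤ 1 := by nlinarith [key, hα0]
  have hf0 : f u0 ≤ 1 := by nlinarith [hdf, h1le]
  have hft : f t ≤ 1 := le_trans (hmax t (Finset.mem_univ t)) hf0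
  have heq : ∑ x : V, π x t / (G.degree t : ℝ) = f t := by
    simp only [hfdef, hSdef]
    rw [Finset.sum_div]
  exact ⟨heq ▸ hft, (div_le_one (hdpos t)).mp hft⟩
end

section
/- The push operation preserves the ForwardPush invariant: if (p, r) satisfies the ForwardPush invariant with respect to s, and (p', r') is obtained from (p, r) by a push at any vertex u, then (p', r') also satisfies the ForwardPush invariant with respect to s. -/
open Matrix

/-- The estimate vector produced by a push at vertex `u`: `p' = p + α·r(u)·e_u`. -/
noncomputable def pushEstimate {V : Type*} [Fintype V] [DecidableEq V]
    (G : SimpleGraph V) [DecidableRel G.Adj] (α : ℝ) (p r : V → ℝ) (u : V) : V → ℝ :=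
  p + (α * r u) • (Pi.single u 1 : V → ℝ)

/-- The residual vector produced by a push at vertex `u`: `r'(u) = 0` and
`r'(w) = r(w) + (1−α)·r(u)·A(u,w)/d(u)` for `w ≠ u`. -/
noncomputable def pushResidual {V : Type*} [Fintype V] [DecidableEq V]
    (G : SimpleGraph V) [DecidableRel G.Adj] (α : ℝ) (r : V → ℝ) (u : V) : V → ℝ :=
  fun w => if w = u then 0
    else r w + (1 - α) * r u * (G.adjMatrix ℝ u w) / (G.degree u : ℝ)

/-- Source-side recurrence for PPR: `π_u = α e_u + (1-α) Σ_x W(u,x) π_x`. -/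
lemma ppr_source_recurrence
    {V : Type*} [Fintype V] [DecidableEq V]
    (G : SimpleGraph V) [DecidableRel G.Adj]
    (α : ℝ) (hα : α ∈ Set.Ioo (0 : ℝ) 1)
    (π : V → V → ℝ)
    (hπ : ∀ s : V,
      π s = α • (Pi.single s 1 : V → ℝ) + (1 - α) • ((walkMatrix G)ᵀ *ᵥ π s))
    (u w : V) :
    π u w = α * (if u = w then 1 else 0) +
      (1 - α) * ∑ x : V, walkMatrix G u x * π x w := by
  set W := walkMatrix G
  set P : Matrix V V ℝ := Matrix.of π
  have hmat : P = α • (1 : Matrix V V ℝ) + (1 - α) • (P * W) := by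
    ext a b
    have := congrFun (hπ a) b
    simp only [Pi.add_apply, Pi.smul_apply, smul_eq_mul, Matrix.mulVec,
      dotProduct, Matrix.transpose_apply] at this
    simp only [Matrix.add_apply, Matrix.smul_apply, Matrix.one_apply,
      Matrix.mul_apply, smul_eq_mul, P, Matrix.of_apply]
    rw [this]
    congr 1
    · rw [Pi.single_apply]
      by_cases h : a = b <;> simp [h, eq_comm]
    · congr 1
      exact Finset.sum_congr rfl fun x _ => mul_comm _ _
  have hα0 : (α : ℝ) ≠ 0 := ne_of_gt hα.1
  have hPM : P * ((1 : Matrix V V ℝ) - (1 - α) • W) = α • 1 := by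
    rw [Matrix.mul_sub, Matrix.mul_one, Matrix.mul_smul]
    nth_rewrite 1 [hmat]
    abel
  have hright : (α⁻¹ • P) * ((1 : Matrix V V ℝ) - (1 - α) • W) = 1 := by
    rw [Matrix.smul_mul, hPM, smul_smul, inv_mul_cancel₀ hα0, one_smul]
  have hleft : ((1 : Matrix V V ℝ) - (1 - α) • W) * (α⁻¹ • P) = 1 :=
    mul_eq_one_comm.mp hright
  have hleft' : ((1 : Matrix V V ℝ) - (1 - α) • W) * P = α • 1 := by
    have := congrArg (fun M => α • M) hleft
    simpa [Matrix.mul_smul, smul_smul, mul_inv_cancel₀ hα0] using this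
  have hentry := congrFun (congrFun hleft' u) w
  simp only [Matrix.mul_apply, Matrix.sub_apply, Matrix.smul_apply,
    Matrix.one_apply, smul_eq_mul, sub_mul, P, Matrix.of_apply] at hentry
  have e : ∑ x : V, (1 * W u x * π x w - α * W u x * π x w)
      = (1 - α) * ∑ x : V, W u x * π x w := by
    rw [Finset.mul_sum]
    exact Finset.sum_congr rfl fun x _ => by ring
  rw [Finset.sum_sub_distrib] at hentry
  have h1 : ∑ x : V, (if u = x then 1 else 0) * π x w = π u w := by simp
  rw [h1, e] at hentry
  linarith

/-- The push operation preserves the ForwardPush invariant: if `(p, r)` satisfies the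
invariant with respect to `s` and `(p', r')` is obtained by a push at any vertex `u`,
then `(p', r')` also satisfies the invariant with respect to `s`. -/
theorem push_preserves_invariant
    {V : Type*} [Fintype V] [DecidableEq V]
    (G : SimpleGraph V) [DecidableRel G.Adj]
    (hd : ∀ u : V, 0 < G.degree u)
    (α : ℝ) (hα : α ∈ Set.Ioo (0 : ℝ) 1)
    (π : V → V → ℝ)
    (hπ : ∀ s : V,
      π s = α • (Pi.single s 1 : V → ℝ) + (1 - α) • ((walkMatrix G)ᵀ *ᵥ π s))
    (s : V) (p r : V → ℝ)
    (hinv : ∀ w : V, π s w = p w + ∑ x : V, r x * π x w)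
    (u : V) :
    ∀ w : V, π s w = pushEstimate G α p r u w +
      ∑ x : V, pushResidual G α r u x * π x w := by
  intro w
  have key := ppr_source_recurrence G α hα π hπ u w
  have hW : ∀ x, walkMatrix G u x = (G.adjMatrix ℝ u x) / (G.degree u : ℝ) := by
    intro x
    rw [walkMatrix, Matrix.diagonal_mul, div_eq_inv_mul]
  have hWuu : walkMatrix G u u = 0 := by simp [hW u]
  have hres : ∀ x, pushResidual G α r u x
      = r x + (1 - α) * r u * walkMatrix G u x - (if x = u then r u else 0) := by
    intro x
    by_cases h : x = u
    · subst h; simp [pushResidual, hWuu]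
    · simp only [pushResidual, h, if_false, if_neg h, hW x]
      rw [mul_div_assoc]
      simp
  have hsum : ∑ x : V, pushResidual G α r u x * π x w
      = (∑ x : V, r x * π x w)
        + (1 - α) * r u * (∑ x : V, walkMatrix G u x * π x w)
        - r u * π u w := by
    have hterm : ∀ x, pushResidual G α r u x * π x w
        = r x * π x w + (1 - α) * r u * (walkMatrix G u x * π x w)
          - (if x = u then r u * π x w else 0) := by
      intro x
      rw [hres x]
      split_ifs <;> ring
    rw [Finset.sum_congr rfl fun x _ => hterm x,
      Finset.sum_sub_distrib, Finset.sum_add_distrib, ← Finset.mul_sum]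
    congr 1
    simp
  rw [hinv w, hsum, key]
  simp only [pushEstimate, Pi.add_apply, Pi.smul_apply, Pi.single_apply,
    smul_eq_mul]
  by_cases h : u = w
  · subst h; simp; ring
  · simp only [h, Ne.symm h, if_false]; ring
end

section
/- Run-time bound for ForwardPush: let ε > 0, let r⁰ = e_s, and for t = 1, …, T let r^t be obtained from r^{t−1} by a push at a vertex u_t (that is, r^t(u_t) = 0 and r^t(w) = r^{t−1}(w) + (1−α)·r^{t−1}(u_t)·A(u_t,w)/d(u_t) for w ≠ u_t). If r^{t−1}(u_t) > ε·d(u_t) for every t = 1, …, T, then ε·α·Σ_{t=1}^T d(u_t) ≤ 1 − Σ_{w∈V} r^T(w) ≤ 1; in particular Σ_{t=1}^T d(u_t) ≤ 1/(ε·α). -/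
open Matrix

lemma sum_adjMatrix_row {V : Type*} [Fintype V] [DecidableEq V]
    (G : SimpleGraph V) [DecidableRel G.Adj] (u : V) :
    ∑ w : V, (G.adjMatrix ℝ u w) = (G.degree u : ℝ) := by
  simp [SimpleGraph.adjMatrix_apply, SimpleGraph.degree,
    SimpleGraph.neighborFinset_eq_filter, Finset.sum_boole]

lemma sum_pushResidual {V : Type*} [Fintype V] [DecidableEq V]
    (G : SimpleGraph V) [DecidableRel G.Adj] (α : ℝ) (r : V → ℝ) (u : V)
    (hd : 0 < G.degree u) :
    ∑ w : V, pushResidual G α r u w = (∑ w : V, r w) - α * r u := by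
  have hg : ∀ w, (if w = u then 0 else
      r w + (1 - α) * r u * (G.adjMatrix ℝ u w) / (G.degree u : ℝ))
      = (r w + (1 - α) * r u * (G.adjMatrix ℝ u w) / (G.degree u : ℝ))
        - (if w = u then r u else 0) := by
    intro w
    by_cases h : w = u <;> simp [h]
  have hdne : ((G.degree u : ℝ)) ≠ 0 := by positivity
  calc ∑ w : V, pushResidual G α r u w
      = ∑ w : V, ((r w + (1 - α) * r u * (G.adjMatrix ℝ u w) / (G.degree u : ℝ))
        - (if w = u then r u else 0)) := by
        unfold pushResidual; exact Finset.sum_congr rfl fun w _ => hg w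
    _ = (∑ w : V, r w) + (1 - α) * r u * (∑ w : V, (G.adjMatrix ℝ u w)) / (G.degree u : ℝ)
        - r u := by
        rw [Finset.sum_sub_distrib, Finset.sum_add_distrib, Finset.sum_ite_eq' Finset.univ u]
        simp only [Finset.mem_univ, if_true, mul_div_assoc]
        rw [← Finset.mul_sum, ← Finset.sum_div]
    _ = (∑ w : V, r w) - α * r u := by
        rw [sum_adjMatrix_row, mul_div_assoc, div_self hdne]
        ring

lemma pushResidual_nonneg {V : Type*} [Fintype V] [DecidableEq V]
    (G : SimpleGraph V) [DecidableRel G.Adj] {α : ℝ} (hα : α ≤ 1) {r : V → ℝ}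
    (hr : ∀ w, 0 ≤ r w) (u : V) (w : V) : 0 ≤ pushResidual G α r u w := by
  unfold pushResidual
  by_cases h : w = u
  · simp [h]
  · simp only [h, if_false]
    have h1 : (0:ℝ) ≤ G.adjMatrix ℝ u w := by
      rw [SimpleGraph.adjMatrix_apply]; positivity
    have h2 : (0:ℝ) ≤ (G.degree u : ℝ) := Nat.cast_nonneg _
    have h3 : (0:ℝ) ≤ 1 - α := by linarith
    exact add_nonneg (hr w) (div_nonneg (mul_nonneg (mul_nonneg h3 (hr u)) h1) h2)

/-- Run-time bound for ForwardPush: starting from `r⁰ = e_s`, if each step `t < T` pushes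
at a vertex `u t` whose residual exceeds `ε·d(u t)`, then
`ε·α·∑_{t<T} d(u t) ≤ 1 − ‖r^T‖₁ ≤ 1`; in particular `∑_{t<T} d(u t) ≤ 1/(ε·α)`. -/
theorem forwardpush_runtime_bound
    {V : Type*} [Fintype V] [DecidableEq V]
    (G : SimpleGraph V) [DecidableRel G.Adj]
    (hd : ∀ u : V, 0 < G.degree u)
    (α : ℝ) (hα : α ∈ Set.Ioo (0 : ℝ) 1)
    (ε : ℝ) (hε : 0 < ε)
    (s : V) (T : ℕ) (u : ℕ → V) (r : ℕ → V → ℝ)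
    (h0 : r 0 = (Pi.single s 1 : V → ℝ))
    (hpush : ∀ t < T, r (t + 1) = pushResidual G α (r t) (u t))
    (hbig : ∀ t < T, r t (u t) > ε * (G.degree (u t) : ℝ)) :
    ε * α * ∑ t ∈ Finset.range T, (G.degree (u t) : ℝ) ≤ 1 - ∑ w : V, r T w ∧
    1 - ∑ w : V, r T w ≤ 1 ∧
    ∑ t ∈ Finset.range T, (G.degree (u t) : ℝ) ≤ 1 / (ε * α) := by
  obtain ⟨hα0, hα1⟩ := hα
  have key : ∀ n, n ≤ T → (∀ w, 0 ≤ r n w) ∧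
      ∑ w : V, r n w = 1 - α * ∑ t ∈ Finset.range n, r t (u t) := by
    intro n
    induction n with
    | zero =>
      intro _
      constructor
      · intro w; rw [h0]
        by_cases h : w = s <;> simp [h, Pi.single_apply]
      · simp [h0, Pi.single_apply]
    | succ n ih =>
      intro hn
      obtain ⟨hnn, hsum⟩ := ih (le_of_lt (Nat.lt_of_succ_le hn))
      rw [hpush n (Nat.lt_of_succ_le hn)]
      refine ⟨pushResidual_nonneg G hα1.le hnn (u n), ?_⟩
      rw [sum_pushResidual G α (r n) (u n) (hd (u n)), hsum,
        Finset.sum_range_succ]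
      ring
  obtain ⟨hTnn, hTsum⟩ := key T le_rfl
  have hge : ∀ t ∈ Finset.range T, ε * (G.degree (u t) : ℝ) ≤ r t (u t) := by
    intro t ht; exact (hbig t (Finset.mem_range.mp ht)).le
  have h1 : ε * α * ∑ t ∈ Finset.range T, (G.degree (u t) : ℝ) ≤ 1 - ∑ w : V, r T w := by
    rw [hTsum]
    have : ε * ∑ t ∈ Finset.range T, (G.degree (u t) : ℝ)
        ≤ ∑ t ∈ Finset.range T, r t (u t) := by
      rw [Finset.mul_sum]
      exact Finset.sum_le_sum hge
    nlinarith
  have h2 : 1 - ∑ w : V, r T w ≤ 1 := by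
    have : 0 ≤ ∑ w : V, r T w := Finset.sum_nonneg fun w _ => hTnn w
    linarith
  refine ⟨h1, h2, ?_⟩
  rw [le_div_iff₀ (by positivity)]
  nlinarith
end

section
/- Per-entry estimation error of ForwardPush: if vectors p, r ∈ ℝ^V satisfy the ForwardPush invariant with respect to s (i.e., π_s(w) = p(w) + Σ_{x∈V} r(x)·π_x(w) for every w ∈ V) and |r(v)| ≤ ε·d(v) for every v ∈ V, then |π_s(u) − p(u)| ≤ ε·d(u) for every u ∈ V. -/
open Matrix

/-- Per-entry estimation error of ForwardPush: if `(p, r)` satisfies the ForwardPush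
invariant with respect to `s` and `|r(v)| ≤ ε·d(v)` for every `v`, then
`|π_s(u) − p(u)| ≤ ε·d(u)` for every `u`. -/
theorem forwardpush_estimation_error
    {V : Type*} [Fintype V] [DecidableEq V]
    (G : SimpleGraph V) [DecidableRel G.Adj]
    (hd : ∀ u : V, 0 < G.degree u)
    (α : ℝ) (hα : α ∈ Set.Ioo (0 : ℝ) 1)
    (π : V → V → ℝ)
    (hπ : ∀ s : V,
      π s = α • (Pi.single s 1 : V → ℝ) + (1 - α) • ((walkMatrix G)ᵀ *ᵥ π s))
    (ε : ℝ) (hε : 0 < ε)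
    (s : V) (p r : V → ℝ)
    (hinv : ∀ w : V, π s w = p w + ∑ x : V, r x * π x w)
    (hres : ∀ v : V, |r v| ≤ ε * (G.degree v : ℝ)) :
    ∀ u : V, |π s u - p u| ≤ ε * (G.degree u : ℝ) := by
  obtain ⟨hα0, hα1⟩ := hα
  have hdpos : ∀ v : V, (0 : ℝ) < (G.degree v : ℝ) := fun v => by
    exact_mod_cast hd v
  have hdne : ∀ v : V, (G.degree v : ℝ) ≠ 0 := fun v => (hdpos v).ne'
  -- the normalized quantities q s v = π s v / d v
  set q : V → V → ℝ := fun t v => π t v / (G.degree v : ℝ) with hqdef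
  have hπq : ∀ t v, π t v = q t v * (G.degree v : ℝ) := fun t v => by
    simp [hqdef, div_mul_cancel₀ _ (hdne v)]
  -- the basic equation satisfied by q
  have key : ∀ t w, (G.degree w : ℝ) * q t w
      = α * (if t = w then 1 else 0)
        + (1 - α) * ∑ v ∈ G.neighborFinset w, q t v := by
    intro t w
    have h := congrFun (hπ t) w
    have h2 : π t w = α * (if t = w then 1 else 0)
        + (1 - α) * ∑ v, ((G.degree v : ℝ))⁻¹ * G.adjMatrix ℝ v w * π t v := by
      rw [h]
      simp only [Pi.add_apply, Pi.smul_apply, smul_eq_mul, mulVec, dotProduct,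
        transpose_apply, walkMatrix, Matrix.diagonal_mul, Pi.single_apply]
      congr 1
      · simp [eq_comm]
    have h3 : ∀ v, ((G.degree v : ℝ))⁻¹ * G.adjMatrix ℝ v w * π t v
        = G.adjMatrix ℝ v w * q t v := fun v => by
      simp only [hqdef]
      rw [div_eq_mul_inv]
      ring
    have h4 : ∑ v, G.adjMatrix ℝ v w * q t v = ∑ v ∈ G.neighborFinset w, q t v := by
      rw [SimpleGraph.neighborFinset_eq_filter, Finset.sum_filter]
      refine Finset.sum_congr rfl fun v _ => ?_
      by_cases hadj : G.Adj w v
      · simp [SimpleGraph.adjMatrix_apply, hadj, hadj.symm]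
      · have : ¬ G.Adj v w := fun hc => hadj hc.symm
        simp [SimpleGraph.adjMatrix_apply, hadj, this]
    simp only [h3, h4] at h2
    rw [hπq t w] at h2
    linarith [h2]
  -- nonnegativity of q
  have hnn : ∀ t v, 0 ≤ q t v := by
    intro t
    by_contra hcon
    push_neg at hcon
    obtain ⟨v0, hv0⟩ := hcon
    obtain ⟨w, -, hw⟩ := Finset.exists_min_image Finset.univ (q t) ⟨v0, Finset.mem_univ v0⟩
    have hm : q t w < 0 := lt_of_le_of_lt (hw v0 (Finset.mem_univ v0)) hv0
    have hsum : (∑ v ∈ G.neighborFinset w, q t v)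
        ≥ ∑ v ∈ G.neighborFinset w, q t w :=
      Finset.sum_le_sum fun v _ => hw v (Finset.mem_univ v)
    have hcard : ∑ v ∈ G.neighborFinset w, q t w = (G.degree w : ℝ) * q t w := by
      rw [Finset.sum_const, G.card_neighborFinset_eq_degree]
      simp [nsmul_eq_mul]
    have hk := key t w
    have hδ : (0 : ℝ) ≤ α * (if t = w then 1 else 0) := by positivity
    have h5 : (1 - α) * ((G.degree w : ℝ) * q t w) ≤ (G.degree w : ℝ) * q t w := by
      calc (1 - α) * ((G.degree w : ℝ) * q t w)
          = (1 - α) * ∑ v ∈ G.neighborFinset w, q t w := by rw [hcard]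
        _ ≤ (1 - α) * ∑ v ∈ G.neighborFinset w, q t v :=
            mul_le_mul_of_nonneg_left hsum (by linarith)
        _ ≤ α * (if t = w then 1 else 0) + (1 - α) * ∑ v ∈ G.neighborFinset w, q t v := by
            linarith
        _ = (G.degree w : ℝ) * q t w := (key t w).symm
    have hX : (G.degree w : ℝ) * q t w < 0 := mul_neg_of_pos_of_neg (hdpos w) hm
    nlinarith [h5, hX, mul_neg_of_pos_of_neg hα0 hX]
  -- symmetry of q
  have hsym : ∀ t t' : V, q t t' = q t' t := by
    have E : ∀ t t' : V, α * q t' t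
        = ∑ w, q t' w * ((G.degree w : ℝ) * q t w)
          - (1 - α) * ∑ w, ∑ v ∈ G.neighborFinset w, q t' w * q t v := by
      intro t t'
      have : ∑ w, q t' w * ((G.degree w : ℝ) * q t w)
          = ∑ w, q t' w * (α * (if t = w then 1 else 0)
              + (1 - α) * ∑ v ∈ G.neighborFinset w, q t v) := by
        refine Finset.sum_congr rfl fun w _ => by rw [key t w]
      rw [this]
      simp only [mul_add, Finset.sum_add_distrib, mul_ite, mul_one, mul_zero]
      rw [Finset.sum_ite_eq Finset.univ t (fun w => q t' w * α)]
      simp only [Finset.mem_univ, if_pos]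
      rw [Finset.mul_sum]
      have : ∀ w : V, q t' w * ((1 - α) * ∑ v ∈ G.neighborFinset w, q t v)
          = (1 - α) * ∑ v ∈ G.neighborFinset w, q t' w * q t v := by
        intro w
        rw [show q t' w * ((1 - α) * ∑ v ∈ G.neighborFinset w, q t v)
            = (q t' w * (1 - α)) * ∑ v ∈ G.neighborFinset w, q t v from by ring,
          Finset.mul_sum, Finset.mul_sum]
        exact Finset.sum_congr rfl fun v _ => by ring
      simp only [this]
      rw [← Finset.mul_sum]
      ring
    intro t t'
    have e1 := E t t'
    have e2 := E t' t
    -- the double sums coincide by symmetry of adjacency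
    have hdsym : ∑ w, ∑ v ∈ G.neighborFinset w, q t' w * q t v
        = ∑ w, ∑ v ∈ G.neighborFinset w, q t w * q t' v := by
      have lhs : ∀ (a b : V → ℝ), ∑ w, ∑ v ∈ G.neighborFinset w, a w * b v
          = ∑ w, ∑ v, (if G.Adj w v then a w * b v else 0) := by
        intro a b
        refine Finset.sum_congr rfl fun w _ => ?_
        rw [SimpleGraph.neighborFinset_eq_filter, Finset.sum_filter]
      rw [lhs, lhs, Finset.sum_comm]
      refine Finset.sum_congr rfl fun w _ => Finset.sum_congr rfl fun v _ => ?_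
      by_cases hadj : G.Adj w v
      · simp [hadj, hadj.symm, mul_comm]
      · have : ¬ G.Adj v w := fun hc => hadj hc.symm
        simp [hadj, this]
    have hfirst : ∑ w, q t' w * ((G.degree w : ℝ) * q t w)
        = ∑ w, q t w * ((G.degree w : ℝ) * q t' w) := by
      refine Finset.sum_congr rfl fun w _ => by ring
    have : α * q t' t = α * q t t' := by
      rw [e1, e2, hdsym, hfirst]
    have := mul_left_cancel₀ hα0.ne' this
    linarith
  -- each PPR vector sums to 1
  have hsum1 : ∀ t : V, ∑ w, π t w = 1 := by
    intro t
    have h1 : ∑ w, (G.degree w : ℝ) * q t w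
        = α + (1 - α) * ∑ w, ∑ v ∈ G.neighborFinset w, q t v := by
      have : ∑ w, (G.degree w : ℝ) * q t w
          = ∑ w, (α * (if t = w then 1 else 0)
              + (1 - α) * ∑ v ∈ G.neighborFinset w, q t v) := by
        refine Finset.sum_congr rfl fun w _ => key t w
      rw [this]
      simp only [Finset.sum_add_distrib, mul_ite, mul_one, mul_zero]
      rw [Finset.sum_ite_eq Finset.univ t (fun _ => α), ← Finset.mul_sum]
      simp
    have h2 : ∑ w, ∑ v ∈ G.neighborFinset w, q t v = ∑ v, (G.degree v : ℝ) * q t v := by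
      have lhs : ∑ w, ∑ v ∈ G.neighborFinset w, q t v
          = ∑ w, ∑ v, (if G.Adj w v then q t v else 0) := by
        refine Finset.sum_congr rfl fun w _ => ?_
        rw [SimpleGraph.neighborFinset_eq_filter, Finset.sum_filter]
      rw [lhs, Finset.sum_comm]
      refine Finset.sum_congr rfl fun v _ => ?_
      have : ∑ w, (if G.Adj w v then q t v else 0)
          = ∑ w ∈ G.neighborFinset v, q t v := by
        rw [SimpleGraph.neighborFinset_eq_filter, Finset.sum_filter]
        refine Finset.sum_congr rfl fun w _ => ?_
        by_cases hadj : G.Adj w v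
        · simp [hadj, hadj.symm]
        · have : ¬ G.Adj v w := fun hc => hadj hc.symm
          simp [hadj, this]
      rw [this, Finset.sum_const, G.card_neighborFinset_eq_degree]
      simp [nsmul_eq_mul]
    have hS : ∑ w, π t w = ∑ w, (G.degree w : ℝ) * q t w := by
      refine Finset.sum_congr rfl fun w _ => by rw [hπq t w]; ring
    rw [hS]
    have := h1
    rw [h2] at this
    -- S = α + (1-α) S  ⇒ S = 1
    nlinarith [this]
  -- now the main bound
  intro u
  have hπnn : ∀ t v, 0 ≤ π t v := fun t v => by
    rw [hπq t v]; exact mul_nonneg (hnn t v) (hdpos v).le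
  have h1 : π s u - p u = ∑ x, r x * π x u := by
    have := hinv u; linarith
  rw [h1]
  calc |∑ x, r x * π x u| ≤ ∑ x, |r x * π x u| := Finset.abs_sum_le_sum_abs _ _
    _ ≤ ∑ x, (ε * (G.degree x : ℝ)) * π x u := by
        refine Finset.sum_le_sum fun x _ => ?_
        rw [abs_mul, abs_of_nonneg (hπnn x u)]
        exact mul_le_mul_of_nonneg_right (hres x) (hπnn x u)
    _ = ε * ∑ x, (G.degree x : ℝ) * π x u := by
        rw [Finset.mul_sum]
        exact Finset.sum_congr rfl fun x _ => by ring
    _ = ε * ∑ x, (G.degree u : ℝ) * π u x := by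
        congr 1
        refine Finset.sum_congr rfl fun x _ => ?_
        rw [hπq x u, hπq u x, ← mul_assoc]
        rw [show (G.degree x : ℝ) * (q x u) = (G.degree x : ℝ) * (q u x) by rw [hsym x u]]
        ring
    _ = ε * (G.degree u : ℝ) := by
        rw [← Finset.mul_sum, hsum1 u, mul_one]
end
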